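/- For every positive integer k and every complex number q with |q| < 1 (with the relevant denominators nonzero), the rational function Tbar_k defined by Tbar_1(q) = −q(1+q)/(1+q^2) and Tbar_k(q) = ((q − q^{2k-1}) Tbar_{k-1}(q) − q^{2k-1}(1+q)) / (1+q^{2k}) for k > 1 admits the closed form: Tbar_k(q) = −q^{2k-1}(1+q)/(1+q^{2k}) − (1+q) ((q^2;q^2)_{k-1} / (-q^2;q^2)_k) · sum over j from 0 to k−2 of q^{2k-j-2} (-q^2;q^2)_{k-j-2} / (q^2;q^2)_{k-j-2}. -/

import Mathlib

open scoped BigOperators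

/-- The finite q-Pochhammer symbol `(a; q)_N = ∏_{j=0}^{N-1} (1 - a q^j)`. -/
noncomputable def qPoch (a q : ℂ) (N : ℕ) : ℂ := ∏ j ∈ Finset.range N, (1 - a * q ^ j)

/-- The infinite q-Pochhammer symbol `(a; q)_∞ = ∏_{j=0}^{∞} (1 - a q^j)`. -/
noncomputable def qPochInf (a q : ℂ) : ℂ := ∏' j : ℕ, (1 - a * q ^ j)

/-- An overpartition of `n`: a multiset of positive non-overlined parts together with a
finset of positive overlined parts (the overlined parts are distinct), with total sum `n`. -/
structure Overpartition (n : ℕ) where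
  parts : Multiset ℕ
  overlined : Finset ℕ
  parts_pos : ∀ x ∈ parts, 0 < x
  overlined_pos : ∀ x ∈ overlined, 0 < x
  sum_eq : parts.sum + ∑ x ∈ overlined, x = n

/-- `s` is the smallest non-overlined part of `π`, it appears exactly `k` times among the
non-overlined parts, and every overlined part is greater than `s`. -/
def SptbarCond (k : ℕ) {n : ℕ} (π : Overpartition n) (s : ℕ) : Prop :=
  s ∈ π.parts ∧ (∀ x ∈ π.parts, s ≤ x) ∧ π.parts.count s = k ∧ ∀ x ∈ π.overlined, s < x

/-- `SptbarCond` together with: every part other than `s` is incongruent to `s` modulo 2. -/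
def SptbarOCond (k : ℕ) {n : ℕ} (π : Overpartition n) (s : ℕ) : Prop :=
  SptbarCond k π s ∧ (∀ x ∈ π.parts, x ≠ s → x % 2 ≠ s % 2) ∧
    ∀ x ∈ π.overlined, x % 2 ≠ s % 2

/-- The number of parts of `π` that are greater than `s`. -/
def numGreater {n : ℕ} (π : Overpartition n) (s : ℕ) : ℕ :=
  (π.parts.filter (fun x => s < x)).card + π.overlined.card

/-- The total number of parts of the overpartition `π`. -/
def numParts {n : ℕ} (π : Overpartition n) : ℕ :=
  π.parts.card + π.overlined.card

/-- `sptbar k n`: the number of overpartitions of `n` whose smallest non-overlined part `s`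
appears exactly `k` times and all of whose overlined parts are greater than `s`. -/
noncomputable def sptbar (k n : ℕ) : ℕ :=
  Nat.card {π : Overpartition n // ∃ s, SptbarCond k π s}

/-- `sptbar' k n = a_e(k,n) - a_o(k,n)`. -/
noncomputable def sptbar' (k n : ℕ) : ℤ :=
  (Nat.card {π : Overpartition n // ∃ s, SptbarCond k π s ∧ Even (numGreater π s)} : ℤ) -
    (Nat.card {π : Overpartition n // ∃ s, SptbarCond k π s ∧ Odd (numGreater π s)} : ℤ)

/-- `sptbarO k n`: as `sptbar k n`, with all parts other than the smallest non-overlined part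
incongruent to it modulo 2. -/
noncomputable def sptbarO (k n : ℕ) : ℕ :=
  Nat.card {π : Overpartition n // ∃ s, SptbarOCond k π s}

/-- `sptbarO' k n = b_e(k,n) - b_o(k,n)`. -/
noncomputable def sptbarO' (k n : ℕ) : ℤ :=
  (Nat.card {π : Overpartition n // ∃ s, SptbarOCond k π s ∧ Even (numGreater π s)} : ℤ) -
    (Nat.card {π : Overpartition n // ∃ s, SptbarOCond k π s ∧ Odd (numGreater π s)} : ℤ)

/-- The number of overpartitions of `n` into even parts. -/
noncomputable def pbarE (n : ℕ) : ℕ :=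
  Nat.card {π : Overpartition n // (∀ x ∈ π.parts, Even x) ∧ ∀ x ∈ π.overlined, Even x}

/-- The number of overpartitions of `n` into odd parts with no non-overlined part equal to 1. -/
noncomputable def pbarOex (n : ℕ) : ℕ :=
  Nat.card {π : Overpartition n //
    (∀ x ∈ π.parts, Odd x) ∧ (∀ x ∈ π.overlined, Odd x) ∧ (1 : ℕ) ∉ π.parts}

/-- Among overpartitions of `n` into odd parts with no non-overlined 1's: the number of those
with an even number of parts minus the number of those with an odd number of parts. -/
noncomputable def pbarOex' (n : ℕ) : ℤ :=
  (Nat.card {π : Overpartition n // ((∀ x ∈ π.parts, Odd x) ∧ (∀ x ∈ π.overlined, Odd x) ∧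
      (1 : ℕ) ∉ π.parts) ∧ Even (numParts π)} : ℤ) -
    (Nat.card {π : Overpartition n // ((∀ x ∈ π.parts, Odd x) ∧ (∀ x ∈ π.overlined, Odd x) ∧
      (1 : ℕ) ∉ π.parts) ∧ Odd (numParts π)} : ℤ)

/-- `sptkd k n`: the number of partitions of `n` whose smallest part appears exactly `k`
times and all of whose remaining parts are distinct. -/
noncomputable def sptkd (k n : ℕ) : ℕ :=
  Nat.card {m : Multiset ℕ // (∀ x ∈ m, 0 < x) ∧ m.sum = n ∧
    ∃ s, s ∈ m ∧ (∀ x ∈ m, s ≤ x) ∧ m.count s = k ∧ ∀ x ∈ m, x ≠ s → m.count x = 1}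

/-- `Tbar q 1 = -q(1+q)/(1+q^2)` and
`Tbar q k = ((q - q^(2k-1)) * Tbar q (k-1) - q^(2k-1)(1+q)) / (1 + q^(2k))` for `k > 1`. -/
noncomputable def Tbar (q : ℂ) : ℕ → ℂ
  | 0 => 0
  | 1 => -(q * (1 + q)) / (1 + q ^ 2)
  | (k + 2) => ((q - q ^ (2 * (k + 2) - 1)) * Tbar q (k + 1) - q ^ (2 * (k + 2) - 1) * (1 + q)) /
      (1 + q ^ (2 * (k + 2)))

lemma one_sub_ne_zero_of_abs_lt_one {x : ℂ} (hx : ‖x‖ < 1) : 1 - x ≠ 0 := by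
  intro h
  have hx1 : x = 1 := by linear_combination -h
  simp [hx1] at hx

lemma abs_pow_lt_one' {q : ℂ} (hq : ‖q‖ < 1) {m : ℕ} (hm : m ≠ 0) :
    ‖q ^ m‖ < 1 := by
  rw [norm_pow]
  exact pow_lt_one₀ (norm_nonneg q) hq hm

lemma qPoch_sq_ne_zero {q : ℂ} (hq : ‖q‖ < 1) (m : ℕ) :
    qPoch (q ^ 2) (q ^ 2) m ≠ 0 := by
  rw [qPoch]
  apply Finset.prod_ne_zero_iff.mpr
  intro j _
  have h : q ^ 2 * (q ^ 2) ^ j = q ^ (2 * j + 2) := by ring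
  rw [h]
  exact one_sub_ne_zero_of_abs_lt_one (abs_pow_lt_one' hq (by omega))

lemma qPoch_negsq_ne_zero {q : ℂ} (hq : ‖q‖ < 1) (m : ℕ) :
    qPoch (-q ^ 2) (q ^ 2) m ≠ 0 := by
  rw [qPoch]
  apply Finset.prod_ne_zero_iff.mpr
  intro j _
  have h : -q ^ 2 * (q ^ 2) ^ j = -(q ^ (2 * j + 2)) := by ring
  rw [h]
  have : ‖-(q ^ (2 * j + 2))‖ < 1 := by
    rw [norm_neg]; exact abs_pow_lt_one' hq (by omega)
  exact one_sub_ne_zero_of_abs_lt_one this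

lemma one_add_pow_ne_zero {q : ℂ} (hq : ‖q‖ < 1) {m : ℕ} (hm : m ≠ 0) :
    1 + q ^ m ≠ 0 := by
  have : (1 : ℂ) + q ^ m = 1 - (-(q ^ m)) := by ring
  rw [this]
  apply one_sub_ne_zero_of_abs_lt_one
  rw [norm_neg]
  exact abs_pow_lt_one' hq hm

lemma qPoch_succ (a q : ℂ) (m : ℕ) :
    qPoch a q (m + 1) = qPoch a q m * (1 - a * q ^ m) := Finset.prod_range_succ _ _

lemma Tbar_alg (q t A B s : ℂ) (hA : A ≠ 0) (hB : B ≠ 0)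
    (ht2 : 1 + q ^ 2 * t ≠ 0) (ht4 : 1 + q ^ 4 * t ≠ 0) :
    ((q - q ^ 3 * t) * (-(q * t * (1 + q)) / (1 + q ^ 2 * t) -
        (1 + q) * (A / (B * (1 + q ^ 2 * t))) * s) - q ^ 3 * t * (1 + q)) / (1 + q ^ 4 * t) =
    -(q ^ 3 * t * (1 + q)) / (1 + q ^ 4 * t) -
      (1 + q) * (A * (1 - q ^ 2 * t) / (B * (1 + q ^ 2 * t) * (1 + q ^ 4 * t))) *
        (q * s + q ^ 2 * t * (B / A)) := by
  have hBu : B * (1 + q ^ 2 * t) ≠ 0 := mul_ne_zero hB ht2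
  have hBuv : B * (1 + q ^ 2 * t) * (1 + q ^ 4 * t) ≠ 0 := mul_ne_zero hBu ht4
  have hBuvA : B * (1 + q ^ 2 * t) * (1 + q ^ 4 * t) * A ≠ 0 := mul_ne_zero hBuv hA
  have hL1 : -(q * t * (1 + q)) / (1 + q ^ 2 * t) - (1 + q) * (A / (B * (1 + q ^ 2 * t))) * s
      = (-(q * t * (1 + q)) * B - (1 + q) * A * s) / (B * (1 + q ^ 2 * t)) := by
    field_simp
  have hr : q * s + q ^ 2 * t * (B / A) = (q * s * A + q ^ 2 * t * B) / A := by
    field_simp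
  have hR1 : (1 + q) * (A * (1 - q ^ 2 * t) / (B * (1 + q ^ 2 * t) * (1 + q ^ 4 * t))) *
        ((q * s * A + q ^ 2 * t * B) / A)
      = ((1 + q) * (A * (1 - q ^ 2 * t)) * (q * s * A + q ^ 2 * t * B)) /
        (B * (1 + q ^ 2 * t) * (1 + q ^ 4 * t) * A) := by
    rw [mul_div_assoc', mul_div_assoc', div_mul_eq_mul_div, div_div]
  have hL2 : (q - q ^ 3 * t) * ((-(q * t * (1 + q)) * B - (1 + q) * A * s) /
        (B * (1 + q ^ 2 * t))) - q ^ 3 * t * (1 + q)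
      = ((q - q ^ 3 * t) * (-(q * t * (1 + q)) * B - (1 + q) * A * s) -
          q ^ 3 * t * (1 + q) * (B * (1 + q ^ 2 * t))) / (B * (1 + q ^ 2 * t)) := by
    field_simp
  rw [hL1, hr, hR1, hL2, div_div, div_sub_div _ _ ht4 hBuvA,
    div_eq_div_iff hBuv (mul_ne_zero ht4 hBuvA)]
  ring

lemma Tbar_aux (q : ℂ) (hq : ‖q‖ < 1) (n : ℕ) :
    Tbar q (n + 1) = -(q ^ (2 * n + 1) * (1 + q)) / (1 + q ^ (2 * n + 2)) -
      (1 + q) * (qPoch (q ^ 2) (q ^ 2) n / qPoch (-q ^ 2) (q ^ 2) (n + 1)) *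
        ∑ i ∈ Finset.range n, q ^ (n + 1 + i) *
          (qPoch (-q ^ 2) (q ^ 2) i / qPoch (q ^ 2) (q ^ 2) i) := by
  induction n with
  | zero => simp [Tbar]
  | succ m ih =>
    have hstep : Tbar q (m + 2) =
        ((q - q ^ (2 * (m + 2) - 1)) * Tbar q (m + 1) - q ^ (2 * (m + 2) - 1) * (1 + q)) /
          (1 + q ^ (2 * (m + 2))) := rfl
    rw [hstep, ih]
    have e1 : 2 * (m + 2) - 1 = 2 * m + 3 := by omega
    have e2 : 2 * (m + 2) = 2 * m + 4 := by omega
    rw [e1, e2]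
    set A := qPoch (q ^ 2) (q ^ 2) m with hA
    set B := qPoch (-q ^ 2) (q ^ 2) m with hB
    have hAne : A ≠ 0 := qPoch_sq_ne_zero hq m
    have hBne : B ≠ 0 := qPoch_negsq_ne_zero hq m
    have hPA : qPoch (q ^ 2) (q ^ 2) (m + 1) = A * (1 - q ^ 2 * (q ^ 2) ^ m) :=
      qPoch_succ _ _ _
    have hQB : qPoch (-q ^ 2) (q ^ 2) (m + 1) = B * (1 + q ^ 2 * (q ^ 2) ^ m) := by
      rw [qPoch_succ]; ring
    have hQB2 : qPoch (-q ^ 2) (q ^ 2) (m + 2) =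
        B * (1 + q ^ 2 * (q ^ 2) ^ m) * (1 + q ^ 4 * (q ^ 2) ^ m) := by
      rw [qPoch_succ, hQB]; ring
    -- split off the top term from the new sum
    rw [Finset.sum_range_succ]
    have hsum : ∑ i ∈ Finset.range m, q ^ (m + 1 + 1 + i) *
          (qPoch (-q ^ 2) (q ^ 2) i / qPoch (q ^ 2) (q ^ 2) i) =
        q * ∑ i ∈ Finset.range m, q ^ (m + 1 + i) *
          (qPoch (-q ^ 2) (q ^ 2) i / qPoch (q ^ 2) (q ^ 2) i) := by
      rw [Finset.mul_sum]
      exact Finset.sum_congr rfl fun i _ => by ring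
    rw [hsum, hPA, hQB, hQB2]
    set s := ∑ i ∈ Finset.range m, q ^ (m + 1 + i) *
        (qPoch (-q ^ 2) (q ^ 2) i / qPoch (q ^ 2) (q ^ 2) i) with hs
    have ht2 : (1 : ℂ) + q ^ 2 * (q ^ 2) ^ m ≠ 0 := by
      have h : (1 : ℂ) + q ^ 2 * (q ^ 2) ^ m = 1 + q ^ (2 * m + 2) := by ring_nf
      rw [h]; exact one_add_pow_ne_zero hq (by omega)
    have ht4 : (1 : ℂ) + q ^ 4 * (q ^ 2) ^ m ≠ 0 := by
      have h : (1 : ℂ) + q ^ 4 * (q ^ 2) ^ m = 1 + q ^ (2 * m + 4) := by ring_nf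
      rw [h]; exact one_add_pow_ne_zero hq (by omega)
    have hp1 : q ^ (2 * m + 1) = q * (q ^ 2) ^ m := by ring
    have hp2 : q ^ (2 * m + 2) = q ^ 2 * (q ^ 2) ^ m := by ring
    have hp3 : q ^ (2 * m + 3) = q ^ 3 * (q ^ 2) ^ m := by ring
    have hp4 : q ^ (2 * m + 4) = q ^ 4 * (q ^ 2) ^ m := by ring
    have hp5 : q ^ (m + 1 + 1 + m) = q ^ 2 * (q ^ 2) ^ m := by ring
    rw [hp1, hp2, hp3, hp4, hp5]
    set t := (q ^ 2) ^ m with htdef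
    rw [show 2 * (m + 1) + 1 = 2 * m + 3 from by omega,
      show 2 * (m + 1) + 2 = 2 * m + 4 from by omega, hp3, hp4, ← hA, ← hB]
    exact Tbar_alg q t A B s hAne hBne ht2 ht4

/-- Theorem 2.7: closed form for `Tbar q k`. -/
theorem Tbar_closed_form (k : ℕ) (hk : 1 ≤ k) (q : ℂ) (hq : ‖q‖ < 1) :
    Tbar q k = -(q ^ (2 * k - 1) * (1 + q)) / (1 + q ^ (2 * k)) -
      (1 + q) * (qPoch (q ^ 2) (q ^ 2) (k - 1) / qPoch (-q ^ 2) (q ^ 2) k) *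
        ∑ j ∈ Finset.range (k - 1), q ^ (2 * k - j - 2) *
          (qPoch (-q ^ 2) (q ^ 2) (k - j - 2) / qPoch (q ^ 2) (q ^ 2) (k - j - 2)) := by
  obtain ⟨n, rfl⟩ : ∃ n, k = n + 1 := ⟨k - 1, by omega⟩
  have hsum : ∑ j ∈ Finset.range (n + 1 - 1), q ^ (2 * (n + 1) - j - 2) *
        (qPoch (-q ^ 2) (q ^ 2) (n + 1 - j - 2) / qPoch (q ^ 2) (q ^ 2) (n + 1 - j - 2)) =
      ∑ i ∈ Finset.range n, q ^ (n + 1 + i) *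
        (qPoch (-q ^ 2) (q ^ 2) i / qPoch (q ^ 2) (q ^ 2) i) := by
    rw [← Finset.sum_range_reflect (fun i => q ^ (n + 1 + i) *
        (qPoch (-q ^ 2) (q ^ 2) i / qPoch (q ^ 2) (q ^ 2) i)) n]
    simp only [Nat.add_sub_cancel]
    apply Finset.sum_congr rfl
    intro j hj
    have hjn : j < n := Finset.mem_range.mp hj
    rw [show n + 1 + (n - 1 - j) = 2 * (n + 1) - j - 2 from by omega,
      show n - 1 - j = n + 1 - j - 2 from by omega]
  rw [hsum, show n + 1 - 1 = n from rfl,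
    show 2 * (n + 1) - 1 = 2 * n + 1 from by omega,
    show 2 * (n + 1) = 2 * n + 2 from by omega]
  exact Tbar_aux q hq n
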